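/- arXiv:2507.16405 — 4 statements merged into one kernel-verified Lean document; each statement's English description precedes it below -/
import Mathlib

section
/- If the initial state (T₀, P₀) satisfies that T₀ covers P₀, then for every list of unlabelled examples, the state (T, P) obtained by running the Label procedure on that list also satisfies that T covers P. In particular, if P₀ is nonempty then the final hypothesis set T is nonempty. -/
/-- `T` covers `P` if every example in `P` is accepted by some hypothesis in `T`. -/
def Covers {α : Type*} (T : Set (Set α)) (P : Set α) : Prop :=
  ∀ p ∈ P, ∃ H ∈ T, p ∈ H

open Classical in
/-- The Label step on state `(T, P)` with unlabelled example `e`: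
let `T' = {H ∈ T | e ∉ H}`; if `T'` covers `P` then the new state is `(T', P)`
(`e` labelled negative); otherwise the new state is `(T, insert e P)`
(`e` labelled positive). -/
noncomputable def LabelStep {α : Type*} (s : Set (Set α) × Set α) (e : α) :
    Set (Set α) × Set α :=
  if Covers {H ∈ s.1 | e ∉ H} s.2 then ({H ∈ s.1 | e ∉ H}, s.2)
  else (s.1, insert e s.2)

/-- The Label procedure: left fold of the Label step over a list of examples. -/
noncomputable def LabelRun {α : Type*} (s : Set (Set α) × Set α) (l : List α) :
    Set (Set α) × Set α :=
  l.foldl LabelStep s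

lemma labelrun_inv {α : Type*} (l : List α) :
    ∀ s : Set (Set α) × Set α, Covers s.1 s.2 →
      Covers (LabelRun s l).1 (LabelRun s l).2 ∧ s.2 ⊆ (LabelRun s l).2 := by
  induction l with
  | nil => intro s h; exact ⟨h, subset_rfl⟩
  | cons e t ih =>
    intro s h
    have hstep : Covers (LabelStep s e).1 (LabelStep s e).2 ∧
        s.2 ⊆ (LabelStep s e).2 := by
      unfold LabelStep
      split
      · next hc => exact ⟨hc, subset_rfl⟩
      · next hnc =>
          refine ⟨?_, Set.subset_insert _ _⟩
          intro p hp
          rcases hp with rfl | hp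
          · by_contra hno
            push_neg at hno
            exact hnc (fun q hq => by
              obtain ⟨H, hH, hqH⟩ := h q hq
              exact ⟨H, ⟨hH, hno H hH⟩, hqH⟩)
          · exact h p hp
    have := ih (LabelStep s e) hstep.1
    exact ⟨this.1, hstep.2.trans this.2⟩

/-- If the initial hypothesis set covers the initial positives, the same holds
after running the Label procedure; in particular the final hypothesis set is
nonempty whenever the initial positive set is nonempty. -/
theorem stmt_2 {α : Type*} (T₀ : Set (Set α)) (P₀ : Set α)
    (hTP : Covers T₀ P₀) (l : List α) :
    Covers (LabelRun (T₀, P₀) l).1 (LabelRun (T₀, P₀) l).2 ∧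
      (P₀.Nonempty → (LabelRun (T₀, P₀) l).1.Nonempty) := by
  obtain ⟨hc, hsub⟩ := labelrun_inv l (T₀, P₀) hTP
  refine ⟨hc, fun ⟨p, hp⟩ => ?_⟩
  obtain ⟨H, hH, _⟩ := hc p (hsub hp)
  exact ⟨H, hH⟩
end

section
/- Processing more unlabelled examples yields a smaller hypothesis set: for every initial state (T₀, P₀) and all lists of unlabelled examples l and m, if (T₁, P₁) is the state obtained by running the Label procedure on l and (T₂, P₂) is the state obtained by running it on the concatenation l ++ m, then T₂ ⊆ T₁ and P₁ ⊆ P₂. -/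
lemma labelStep_mono {α : Type*} (s : Set (Set α) × Set α) (e : α) :
    (LabelStep s e).1 ⊆ s.1 ∧ s.2 ⊆ (LabelStep s e).2 := by
  unfold LabelStep
  split
  · exact ⟨fun H hH => hH.1, subset_rfl⟩
  · exact ⟨subset_rfl, Set.subset_insert _ _⟩

lemma labelRun_mono {α : Type*} (s : Set (Set α) × Set α) (m : List α) :
    (LabelRun s m).1 ⊆ s.1 ∧ s.2 ⊆ (LabelRun s m).2 := by
  induction m generalizing s with
  | nil => exact ⟨subset_rfl, subset_rfl⟩
  | cons e t ih =>
    have h1 := labelStep_mono s e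
    have h2 := ih (LabelStep s e)
    exact ⟨h2.1.trans h1.1, h1.2.trans h2.2⟩

/-- Processing more unlabelled examples yields a smaller hypothesis set and a
larger positive set. -/
theorem stmt_4 {α : Type*} (T₀ : Set (Set α)) (P₀ : Set α) (l m : List α) :
    (LabelRun (T₀, P₀) (l ++ m)).1 ⊆ (LabelRun (T₀, P₀) l).1 ∧
      (LabelRun (T₀, P₀) l).2 ⊆ (LabelRun (T₀, P₀) (l ++ m)).2 := by
  have : LabelRun (T₀, P₀) (l ++ m) = LabelRun (LabelRun (T₀, P₀) l) m := by
    simp [LabelRun, List.foldl_append]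
  rw [this]
  exact labelRun_mono _ m
end

section
/- The output of the Label procedure is consistent with the labelling it produces: suppose the initial state (T₀, P₀) satisfies that T₀ covers P₀, and run the Label procedure on a list of unlabelled examples, obtaining final state (T, P). Then (i) every example that was labelled negative during the run is rejected by every hypothesis in the final set T (it belongs to no H ∈ T), and (ii) every example in the final positive set P (including those relabelled positive during the run) is accepted by some hypothesis in T. -/
open Classical in
/-- The set of examples labelled negative during a run of the Label procedure. -/
noncomputable def LabelRunNeg {α : Type*} :
    Set (Set α) × Set α → List α → Set α
  | _, [] => ∅
  | s, e :: l =>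
      if Covers {H ∈ s.1 | e ∉ H} s.2 then
        insert e (LabelRunNeg (LabelStep s e) l)
      else LabelRunNeg (LabelStep s e) l


lemma labelRun_fst_subset {α : Type*} (s : Set (Set α) × Set α) (l : List α) :
    (LabelRun s l).1 ⊆ s.1 := by
  induction l generalizing s with
  | nil => exact fun _ h => h
  | cons e l ih =>
      intro H hH
      have := ih (LabelStep s e) hH
      unfold LabelStep at this
      split at this
      · exact this.1
      · exact this

lemma labelStep_covers {α : Type*} (s : Set (Set α) × Set α) (e : α)
    (h : Covers s.1 s.2) : Covers (LabelStep s e).1 (LabelStep s e).2 := by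
  unfold LabelStep
  split
  · next h' => exact h'
  · intro p hp
    rcases hp with rfl | hp
    · by_contra hc
      push_neg at hc
      next h' => exact h' (fun q hq => by
        rcases h q hq with ⟨H, hH, hqH⟩
        exact ⟨H, ⟨hH, hc H hH ∘ fun hpH => hpH⟩, hqH⟩)
    · next => exact h p hp

lemma labelRun_covers {α : Type*} (s : Set (Set α) × Set α) (l : List α)
    (h : Covers s.1 s.2) : Covers (LabelRun s l).1 (LabelRun s l).2 := by
  induction l generalizing s with
  | nil => exact h
  | cons e l ih => exact ih _ (labelStep_covers s e h)

/-- The output of the Label procedure is consistent with the labelling it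
produces: every example labelled negative during the run is rejected by every
hypothesis in the final hypothesis set, and every example in the final positive
set is accepted by some hypothesis in the final hypothesis set. -/
theorem stmt_5 {α : Type*} (T₀ : Set (Set α)) (P₀ : Set α)
    (hTP : Covers T₀ P₀) (l : List α) :
    (∀ e ∈ LabelRunNeg (T₀, P₀) l, ∀ H ∈ (LabelRun (T₀, P₀) l).1, e ∉ H) ∧
      (∀ p ∈ (LabelRun (T₀, P₀) l).2, ∃ H ∈ (LabelRun (T₀, P₀) l).1, p ∈ H) := by
  constructor
  · have key : ∀ (l : List α) (s : Set (Set α) × Set α),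
        ∀ e ∈ LabelRunNeg s l, ∀ H ∈ (LabelRun s l).1, e ∉ H := by
      intro l
      induction l with
      | nil => intro s e he; simp [LabelRunNeg] at he
      | cons a l ih =>
          intro s e he H hH
          rw [LabelRunNeg] at he
          split at he
          · next hc =>
            rcases he with rfl | he
            · have hsub : (LabelRun s (e :: l)).1 ⊆ (LabelStep s e).1 :=
                labelRun_fst_subset (LabelStep s e) l
              have : H ∈ (LabelStep s e).1 := hsub hH
              unfold LabelStep at this
              rw [if_pos hc] at this
              exact this.2
            · exact ih (LabelStep s a) e he H hH
          · exact ih (LabelStep s a) e he H hH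
    exact key l (T₀, P₀)
  · exact labelRun_covers (T₀, P₀) l hTP
end

section
/- (Completeness of the Chomsky-Greibach form for context-free languages.) For every context-free language L over an alphabet Σ, there exists a context-free grammar in Chomsky normal form — i.e., one in which every production rule is either of the form N → N₁N₂ with N, N₁, N₂ nonterminals, or of the form N → a with a a terminal symbol — whose generated language is L \ {ε} (L with the empty string removed). -/
namespace CNFAux

open ContextFreeGrammar

variable {T : Type}

/-- Symbols relevant to the grammar. -/
def SymSet (g : ContextFreeGrammar.{0} T) : Set (Symbol T g.NT) :=
  {Symbol.nonterminal g.initial} ∪ {x | ∃ r ∈ g.rules, x ∈ r.output}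

/-- Relevant sentential forms: suffixes of rule outputs and singletons of relevant symbols. -/
def F (g : ContextFreeGrammar.{0} T) : Set (List (Symbol T g.NT)) :=
  {l | ∃ r ∈ g.rules, l <:+ r.output} ∪ (fun x => [x]) '' SymSet g

lemma symSet_finite (g : ContextFreeGrammar.{0} T) : (SymSet g).Finite := by
  apply Set.Finite.union (Set.finite_singleton _)
  have : {x | ∃ r ∈ g.rules, x ∈ r.output} = ⋃ r ∈ g.rules, {x | x ∈ r.output} := by
    ext x; simp
  rw [this]
  exact g.rules.finite_toSet.biUnion fun r _ => r.output.finite_toSet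

lemma F_finite (g : ContextFreeGrammar.{0} T) : (F g).Finite := by
  apply Set.Finite.union
  · have : {l | ∃ r ∈ g.rules, l <:+ r.output} = ⋃ r ∈ g.rules, {l | l <:+ r.output} := by
      ext l; simp
    rw [this]
    refine g.rules.finite_toSet.biUnion fun r _ => ?_
    have : {l | l <:+ r.output} ⊆ {l | l ∈ r.output.tails} := by
      intro l hl; simpa [List.mem_tails] using hl
    exact Set.Finite.subset (r.output.tails.finite_toSet) this
  · exact (symSet_finite g).image _

lemma initial_mem_F (g : ContextFreeGrammar.{0} T) :
    [Symbol.nonterminal g.initial] ∈ F g :=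
  Or.inr ⟨_, Or.inl rfl, rfl⟩

lemma output_mem_F {g : ContextFreeGrammar.{0} T} {r : ContextFreeRule T g.NT}
    (hr : r ∈ g.rules) : r.output ∈ F g :=
  Or.inl ⟨r, hr, List.suffix_refl _⟩

lemma mem_symSet_of_mem_F {g : ContextFreeGrammar.{0} T} {l : List (Symbol T g.NT)}
    (hl : l ∈ F g) {x : Symbol T g.NT} (hx : x ∈ l) : x ∈ SymSet g := by
  rcases hl with ⟨r, hr, hsuf⟩ | ⟨y, hy, hyl⟩
  · exact Or.inr ⟨r, hr, hsuf.subset hx⟩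
  · have : x = y := by
      have : x ∈ [y] := by rw [← hyl] at hx; exact hx
      simpa using this
    exact this ▸ hy

lemma F_cons {g : ContextFreeGrammar.{0} T} {x : Symbol T g.NT} {β : List (Symbol T g.NT)}
    (h : x :: β ∈ F g) (hβ : β ≠ []) : β ∈ F g ∧ [x] ∈ F g := by
  constructor
  · rcases h with ⟨r, hr, hsuf⟩ | ⟨y, hy, hxy⟩
    · exact Or.inl ⟨r, hr, (List.suffix_cons x β).trans hsuf⟩
    · simp at hxy; exact absurd hxy.2.symm (by simpa using hβ)
  · exact Or.inr ⟨x, mem_symSet_of_mem_F h (List.mem_cons_self (a := x) (l := β)), rfl⟩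

/-- Fueled derivation. -/
inductive DerivesIn (g : ContextFreeGrammar.{0} T) :
    List (Symbol T g.NT) → List (Symbol T g.NT) → ℕ → Prop
  | refl (u : List (Symbol T g.NT)) : DerivesIn g u u 0
  | head {u v w : List (Symbol T g.NT)} {n : ℕ} :
      g.Produces u v → DerivesIn g v w n → DerivesIn g u w (n + 1)

lemma DerivesIn.derives {g : ContextFreeGrammar.{0} T} {u v : List (Symbol T g.NT)} {n : ℕ}
    (h : DerivesIn g u v n) : g.Derives u v := by
  induction h with
  | refl => rfl
  | head hp _ ih => exact hp.trans_derives ih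

lemma DerivesIn.tail {g : ContextFreeGrammar.{0} T} {u v w : List (Symbol T g.NT)} {n : ℕ}
    (h : DerivesIn g u v n) (hp : g.Produces v w) : DerivesIn g u w (n + 1) := by
  induction h with
  | refl => exact .head hp (.refl _)
  | head hq _ ih => exact .head hq (ih hp)

lemma Derives.derivesIn {g : ContextFreeGrammar.{0} T} {u v : List (Symbol T g.NT)}
    (h : g.Derives u v) : ∃ n, DerivesIn g u v n := by
  induction h with
  | refl => exact ⟨0, .refl _⟩
  | tail _ hp ih => rcases ih with ⟨n, hn⟩; exact ⟨n + 1, hn.tail hp⟩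

lemma not_rewrites_nil {N : Type} {r : ContextFreeRule T N} {v : List (Symbol T N)} :
    ¬ r.Rewrites [] v := by
  intro h
  rcases h.exists_parts with ⟨p, q, hpq, -⟩
  simp at hpq

lemma rewrites_singleton {N : Type} {r : ContextFreeRule T N} {m : N} {v : List (Symbol T N)}
    (h : r.Rewrites [Symbol.nonterminal m] v) : r.input = m ∧ v = r.output := by
  rcases h.exists_parts with ⟨p, q, hpq, rfl⟩
  have hp : p = [] ∧ q = [] := by
    have := congrArg List.length hpq
    simp at this
    constructor <;> [skip; skip] <;> exact List.eq_nil_of_length_eq_zero (by omega)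
  obtain ⟨rfl, rfl⟩ := hp
  simp at hpq
  simp [hpq]

lemma not_rewrites_terminals {N : Type} {r : ContextFreeRule T N} {t : List T}
    {v : List (Symbol T N)} : ¬ r.Rewrites (t.map Symbol.terminal) v := by
  intro h
  rcases h.exists_parts with ⟨p, q, hpq, -⟩
  have : Symbol.nonterminal r.input ∈ t.map (Symbol.terminal (N := N)) := by
    rw [hpq]; simp
  simp at this

lemma derivesIn_terminals {g : ContextFreeGrammar.{0} T} {t : List T}
    {v : List (Symbol T g.NT)} {n : ℕ}
    (h : DerivesIn g (t.map Symbol.terminal) v n) : v = t.map Symbol.terminal := by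
  cases h with
  | refl => rfl
  | head hp _ => rcases hp with ⟨r, -, hr⟩; exact absurd hr not_rewrites_terminals

lemma derivesIn_nil {g : ContextFreeGrammar.{0} T} {v : List (Symbol T g.NT)} {n : ℕ}
    (h : DerivesIn g [] v n) : v = [] := by
  cases h with
  | refl => rfl
  | head hp _ => rcases hp with ⟨r, -, hr⟩; exact absurd hr not_rewrites_nil

lemma derivesIn_singleton_nt {g : ContextFreeGrammar.{0} T} {m : g.NT}
    {w : List (Symbol T g.NT)} {n : ℕ}
    (h : DerivesIn g [Symbol.nonterminal m] w (n + 1)) :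
    ∃ r ∈ g.rules, r.input = m ∧ DerivesIn g r.output w n := by
  cases h with
  | head hp hd =>
    rcases hp with ⟨r, hr, hrw⟩
    obtain ⟨h1, h2⟩ := rewrites_singleton hrw
    exact ⟨r, hr, h1, h2 ▸ hd⟩

lemma produces_append_split {g : ContextFreeGrammar.{0} T} {u v x : List (Symbol T g.NT)}
    (h : g.Produces (u ++ v) x) :
    (∃ u', g.Produces u u' ∧ x = u' ++ v) ∨ (∃ v', g.Produces v v' ∧ x = u ++ v') := by
  rcases h with ⟨r, hr, hrw⟩
  rcases hrw.exists_parts with ⟨p, q, hpq, rfl⟩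
  rw [List.append_assoc, List.append_eq_append_iff] at hpq
  rcases hpq with ⟨k, hk, hv⟩ | ⟨k, hk, hv⟩
  · -- p = u ++ k, v = k ++ ([nt] ++ q)
    right
    refine ⟨k ++ r.output ++ q, ⟨r, hr, ?_⟩, by rw [hk]; simp⟩
    rw [hv, ← List.append_assoc]
    exact r.rewrites_of_exists_parts k q
  · -- u = p ++ k, [nt] ++ q = k ++ v
    cases k with
    | nil =>
      right
      refine ⟨r.output ++ q, ⟨r, hr, ?_⟩, by rw [hk]; simp⟩
      have hv' : v = [Symbol.nonterminal r.input] ++ q := by simpa using hv.symm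
      rw [hv']
      exact ContextFreeRule.Rewrites.head q
    | cons c k' =>
      left
      simp only [List.singleton_append, List.cons_append] at hv
      obtain ⟨rfl, hq⟩ : Symbol.nonterminal r.input = c ∧ q = k' ++ v := by
        rw [List.cons.injEq] at hv
        refine ⟨hv.1, ?_⟩
        have := hv.2
        simpa using this
      refine ⟨p ++ r.output ++ k', ⟨r, hr, ?_⟩, by rw [hq]; simp⟩
      rw [hk]
      have := r.rewrites_of_exists_parts p k'
      simpa using this

lemma derivesIn_append_split {g : ContextFreeGrammar.{0} T} {s w : List (Symbol T g.NT)} {n : ℕ}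
    (h : DerivesIn g s w n) :
    ∀ u v, s = u ++ v → ∃ w₁ w₂ n₁ n₂, w = w₁ ++ w₂ ∧ n = n₁ + n₂ ∧
      DerivesIn g u w₁ n₁ ∧ DerivesIn g v w₂ n₂ := by
  induction h with
  | refl s => exact fun u v huv => ⟨u, v, 0, 0, huv, rfl, .refl u, .refl v⟩
  | @head s x w n hp _ ih =>
    rintro u v rfl
    rcases produces_append_split hp with ⟨u', hu', rfl⟩ | ⟨v', hv', rfl⟩
    · obtain ⟨w₁, w₂, n₁, n₂, rfl, rfl, h1, h2⟩ := ih u' v rfl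
      exact ⟨w₁, w₂, n₁ + 1, n₂, rfl, by omega, .head hu' h1, h2⟩
    · obtain ⟨w₁, w₂, n₁, n₂, rfl, rfl, h1, h2⟩ := ih u v' rfl
      exact ⟨w₁, w₂, n₁, n₂ + 1, rfl, by omega, h1, .head hv' h2⟩

lemma mem_of_derives {g : ContextFreeGrammar.{0} T} {u v : List (Symbol T g.NT)}
    (h : g.Derives u v) {x : Symbol T g.NT} (hx : x ∈ v) :
    x ∈ u ∨ ∃ r ∈ g.rules, x ∈ r.output := by
  induction h with
  | refl => exact Or.inl hx
  | tail _ hp ih =>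
    rcases hp with ⟨r, hr, hrw⟩
    rcases hrw.exists_parts with ⟨p, q, hpq, rfl⟩
    rcases List.mem_append.1 hx with hx' | hx'
    · rcases List.mem_append.1 hx' with hx'' | hx''
      · exact ih (by rw [hpq]; simp [hx''])
      · exact Or.inr ⟨r, hr, hx''⟩
    · exact ih (by rw [hpq]; simp [hx'])

end CNFAux

namespace CNFAux

open ContextFreeGrammar

variable {T : Type}

/-- The rules of the CNF grammar, as a set. -/
def cnfRuleSet (g : ContextFreeGrammar.{0} T) :
    Set (ContextFreeRule T (List (Symbol T g.NT))) :=
  {r | ∃ α β γ, α ∈ F g ∧ β ∈ F g ∧ γ ∈ F g ∧ g.Derives α (β ++ γ) ∧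
      r = ⟨α, [Symbol.nonterminal β, Symbol.nonterminal γ]⟩} ∪
  {r | ∃ α a, α ∈ F g ∧ g.Derives α [Symbol.terminal a] ∧ r = ⟨α, [Symbol.terminal a]⟩}

lemma cnfRuleSet_finite (g : ContextFreeGrammar.{0} T) : (cnfRuleSet g).Finite := by
  apply Set.Finite.union
  · have hsub : {r : ContextFreeRule T (List (Symbol T g.NT)) |
        ∃ α β γ, α ∈ F g ∧ β ∈ F g ∧ γ ∈ F g ∧ g.Derives α (β ++ γ) ∧
        r = ⟨α, [Symbol.nonterminal β, Symbol.nonterminal γ]⟩} ⊆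
        (fun p : List (Symbol T g.NT) × List (Symbol T g.NT) × List (Symbol T g.NT) =>
          (⟨p.1, [Symbol.nonterminal p.2.1, Symbol.nonterminal p.2.2]⟩ :
            ContextFreeRule T (List (Symbol T g.NT)))) '' ((F g) ×ˢ (F g) ×ˢ (F g)) := by
      rintro r ⟨α, β, γ, hα, hβ, hγ, -, rfl⟩
      exact ⟨(α, β, γ), ⟨hα, hβ, hγ⟩, rfl⟩
    exact Set.Finite.subset (((F_finite g).prod ((F_finite g).prod (F_finite g))).image _) hsub
  · set A : Set T := {a | Symbol.terminal a ∈ SymSet g} with hA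
    have hAfin : A.Finite := by
      have : A = (fun a => (Symbol.terminal a : Symbol T g.NT)) ⁻¹' (SymSet g) := rfl
      rw [this]
      exact Set.Finite.preimage (fun a _ b _ h => by simpa using h) (symSet_finite g)
    have hsub : {r : ContextFreeRule T (List (Symbol T g.NT)) |
        ∃ α a, α ∈ F g ∧ g.Derives α [Symbol.terminal a] ∧ r = ⟨α, [Symbol.terminal a]⟩} ⊆
        (fun p : List (Symbol T g.NT) × T =>
          (⟨p.1, [Symbol.terminal p.2]⟩ : ContextFreeRule T (List (Symbol T g.NT)))) ''
          ((F g) ×ˢ A) := by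
      rintro r ⟨α, a, hα, hd, rfl⟩
      refine ⟨(α, a), ⟨hα, ?_⟩, rfl⟩
      rcases mem_of_derives hd (List.mem_singleton_self _) with h | ⟨r', hr', h⟩
      · exact mem_symSet_of_mem_F hα h
      · exact Or.inr ⟨r', hr', h⟩
    exact Set.Finite.subset (((F_finite g).prod hAfin).image _) hsub

/-- The CNF grammar. -/
@[reducible] noncomputable def cnf (g : ContextFreeGrammar.{0} T) : ContextFreeGrammar.{0} T where
  NT := List (Symbol T g.NT)
  initial := [Symbol.nonterminal g.initial]
  rules := (cnfRuleSet_finite g).toFinset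

lemma mem_cnf_rules {g : ContextFreeGrammar.{0} T} {r : ContextFreeRule T (cnf g).NT} :
    r ∈ (cnf g).rules ↔ r ∈ cnfRuleSet g := Set.Finite.mem_toFinset _

lemma cnf_shape {g : ContextFreeGrammar.{0} T} {r : ContextFreeRule T (cnf g).NT}
    (hr : r ∈ (cnf g).rules) :
    (∃ n₁ n₂ : (cnf g).NT, r.output = [Symbol.nonterminal n₁, Symbol.nonterminal n₂]) ∨
    ∃ a : T, r.output = [Symbol.terminal a] := by
  rcases mem_cnf_rules.1 hr with ⟨α, β, γ, -, -, -, -, rfl⟩ | ⟨α, a, -, -, rfl⟩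
  · exact Or.inl ⟨β, γ, rfl⟩
  · exact Or.inr ⟨a, rfl⟩

/-- Interpretation of new sentential forms as old ones. -/
def embed (g : ContextFreeGrammar.{0} T) :
    List (Symbol T (cnf g).NT) → List (Symbol T g.NT) :=
  fun l => l.flatMap fun s => match s with
    | Symbol.terminal a => [Symbol.terminal a]
    | Symbol.nonterminal α => α

@[simp] lemma embed_append (g : ContextFreeGrammar.{0} T) (u v : List (Symbol T (cnf g).NT)) :
    embed g (u ++ v) = embed g u ++ embed g v :=
  List.flatMap_append

@[simp] lemma embed_cons_nt (g : ContextFreeGrammar.{0} T) (α : (cnf g).NT)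
    (l : List (Symbol T (cnf g).NT)) :
    embed g (Symbol.nonterminal α :: l) = α ++ embed g l := by
  simp [embed]

@[simp] lemma embed_cons_t (g : ContextFreeGrammar.{0} T) (a : T)
    (l : List (Symbol T (cnf g).NT)) :
    embed g (Symbol.terminal a :: l) = Symbol.terminal a :: embed g l := by
  simp [embed]

@[simp] lemma embed_nt (g : ContextFreeGrammar.{0} T) (α : (cnf g).NT) :
    embed g [Symbol.nonterminal α] = α := by
  simp [embed]

@[simp] lemma embed_terminals (g : ContextFreeGrammar.{0} T) (w : List T) :
    embed g (w.map Symbol.terminal) = w.map Symbol.terminal := by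
  induction w with
  | nil => rfl
  | cons a w ih => simpa [embed] using ih

lemma cnf_sound_produces {g : ContextFreeGrammar.{0} T} {u v : List (Symbol T (cnf g).NT)}
    (h : (cnf g).Produces u v) : g.Derives (embed g u) (embed g v) := by
  rcases h with ⟨r, hr, hrw⟩
  rcases hrw.exists_parts with ⟨p, q, rfl, rfl⟩
  have key : g.Derives r.input (embed g r.output) := by
    rcases mem_cnf_rules.1 hr with ⟨α, β, γ, -, -, -, hd, rfl⟩ | ⟨α, a, -, hd, rfl⟩
    · simpa [embed] using hd
    · simpa [embed] using hd
  have e1 : embed g (p ++ [Symbol.nonterminal r.input] ++ q)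
      = embed g p ++ ((show List (Symbol T g.NT) from r.input) ++ embed g q) := by
    rw [embed_append, embed_append, embed_nt, List.append_assoc]
  have e2 : embed g (p ++ r.output ++ q)
      = embed g p ++ (embed g r.output ++ embed g q) := by
    rw [embed_append, embed_append, List.append_assoc]
  rw [e1, e2]
  exact Derives.append_left ((key.append_right (embed g q))) (embed g p)

end CNFAux

namespace CNFAux

open ContextFreeGrammar

variable {T : Type}

lemma cnf_sound {g : ContextFreeGrammar.{0} T} {u v : List (Symbol T (cnf g).NT)}
    (h : (cnf g).Derives u v) : g.Derives (embed g u) (embed g v) := by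
  induction h with
  | refl => rfl
  | tail _ hp ih => exact ih.trans (cnf_sound_produces hp)

lemma cnf_nonempty {g : ContextFreeGrammar.{0} T} {u v : List (Symbol T (cnf g).NT)}
    (h : (cnf g).Derives u v) (hu : u ≠ []) : v ≠ [] := by
  induction h with
  | refl => exact hu
  | tail _ hp _ =>
    rcases hp with ⟨r, hr, hrw⟩
    rcases hrw.exists_parts with ⟨p, q, -, rfl⟩
    rcases cnf_shape hr with ⟨n₁, n₂, ho⟩ | ⟨a, ho⟩ <;> simp [ho]

lemma derivesIn_zero {g : ContextFreeGrammar.{0} T} {u v : List (Symbol T g.NT)}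
    (h : DerivesIn g u v 0) : u = v := by cases h; rfl

lemma split_claim {g : ContextFreeGrammar.{0} T} :
    ∀ n : ℕ, ∀ α ∈ F g, ∀ w : List T, DerivesIn g α (w.map Symbol.terminal) n →
    2 ≤ w.length →
    ∃ β γ w₁ w₂, β ∈ F g ∧ γ ∈ F g ∧ w = w₁ ++ w₂ ∧ w₁ ≠ [] ∧ w₂ ≠ [] ∧
      g.Derives α (β ++ γ) ∧ g.Derives β (w₁.map Symbol.terminal) ∧
      g.Derives γ (w₂.map Symbol.terminal) := by
  intro n
  induction n using Nat.strong_induction_on with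
  | _ n ih =>
  intro α hα w h hw
  match α, hα with
  | [], hα =>
    have := derivesIn_nil h
    have : w = [] := by cases w <;> simp_all
    simp [this] at hw
  | [Symbol.terminal a], hα =>
    have h' : DerivesIn g (List.map Symbol.terminal [a]) (w.map Symbol.terminal) n := by
      simpa using h
    have := derivesIn_terminals h'
    have hwa : w = [a] := by
      have : List.map (Symbol.terminal : T → Symbol T g.NT) w = List.map Symbol.terminal [a] := by
        simpa using this
      exact List.map_injective_iff.2 (fun x y hxy => Symbol.terminal.inj hxy) this
    simp [hwa] at hw
  | [Symbol.nonterminal m], hα =>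
    match n, h with
    | 0, h =>
      have := derivesIn_zero h
      have : (Symbol.nonterminal m : Symbol T g.NT) ∈ w.map Symbol.terminal := by
        rw [← this]; simp
      simp at this
    | (k+1), h =>
      obtain ⟨r, hr, hin, hd⟩ := derivesIn_singleton_nt h
      obtain ⟨β, γ, w₁, w₂, hβ, hγ, hww, h1, h2, hdd, hb1, hb2⟩ :=
        ih k (Nat.lt_succ_self k) r.output (output_mem_F hr) w hd hw
      refine ⟨β, γ, w₁, w₂, hβ, hγ, hww, h1, h2, ?_, hb1, hb2⟩
      have hprod : g.Produces [Symbol.nonterminal m] r.output :=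
        ⟨r, hr, hin ▸ ContextFreeRule.Rewrites.input_output⟩
      exact hprod.trans_derives hdd
  | (x :: y :: β''), hα =>
    set β' : List (Symbol T g.NT) := y :: β'' with hβ'
    have hβne : β' ≠ [] := by simp [hβ']
    obtain ⟨hβF, hxF⟩ := F_cons hα hβne
    obtain ⟨s₁, s₂, n₁, n₂, hs, hn, hd1, hd2⟩ :=
      derivesIn_append_split h [x] β' rfl
    rw [List.map_eq_append_iff] at hs
    obtain ⟨u, v, rfl, rfl, rfl⟩ := hs
    by_cases hu : u = []
    · subst hu
      have hn₁ : n₁ ≠ 0 := by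
        intro h0
        subst h0
        simpa using derivesIn_zero hd1
      have hlt : n₂ < n := by omega
      obtain ⟨β, γ, w₁, w₂, hβ, hγ, hww, h1, h2, hdd, hb1, hb2⟩ :=
        ih n₂ hlt β' hβF v hd2 (by simpa using hw)
      refine ⟨β, γ, w₁, w₂, hβ, hγ, by simpa using hww, h1, h2, ?_, hb1, hb2⟩
      have : g.Derives ([x] ++ β') ([] ++ β') := by
        have := hd1.derives
        exact Derives.append_right (by simpa using this) β'
      exact (by simpa using this : g.Derives (x :: β') β').trans hdd
    · by_cases hv : v = []
      · subst hv
        have hn₂ : n₂ ≠ 0 := by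
          intro h0
          subst h0
          have := derivesIn_zero hd2
          simp_all
        have hlt : n₁ < n := by omega
        obtain ⟨β, γ, w₁, w₂, hβ, hγ, hww, h1, h2, hdd, hb1, hb2⟩ :=
          ih n₁ hlt [x] hxF u hd1 (by simpa using hw)
        refine ⟨β, γ, w₁, w₂, hβ, hγ, by simpa using hww, h1, h2, ?_, hb1, hb2⟩
        have : g.Derives ([x] ++ β') ([x] ++ []) := by
          have := hd2.derives
          simpa using Derives.append_left (by simpa using this) [x]
        exact (by simpa using this : g.Derives (x :: β') [x]).trans hdd
      · exact ⟨[x], β', u, v, hxF, hβF, rfl, hu, hv, by rw [List.singleton_append],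
          hd1.derives, hd2.derives⟩

lemma cnf_complete {g : ContextFreeGrammar.{0} T} :
    ∀ k : ℕ, ∀ w : List T, w.length ≤ k → w ≠ [] → ∀ α ∈ F g,
    g.Derives α (w.map Symbol.terminal) →
    (cnf g).Derives [Symbol.nonterminal α] (w.map Symbol.terminal) := by
  intro k
  induction k with
  | zero => intro w hlen hne; simp_all [List.length_eq_zero_iff]
  | succ k ih =>
    intro w hlen hne α hα hd
    by_cases hw2 : 2 ≤ w.length
    · obtain ⟨n, hn⟩ := Derives.derivesIn hd
      obtain ⟨β, γ, w₁, w₂, hβ, hγ, rfl, h1, h2, hdd, hb1, hb2⟩ :=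
        split_claim n α hα w hn hw2
      have hrule : (⟨α, [Symbol.nonterminal β, Symbol.nonterminal γ]⟩ :
          ContextFreeRule T (cnf g).NT) ∈ (cnf g).rules := by
        rw [mem_cnf_rules]
        exact Or.inl ⟨α, β, γ, hα, hβ, hγ, hdd, rfl⟩
      have hp : (cnf g).Produces [Symbol.nonterminal α]
          [Symbol.nonterminal β, Symbol.nonterminal γ] :=
        ⟨_, hrule, ContextFreeRule.Rewrites.input_output⟩
      have hlen' : w₁.length ≤ k ∧ w₂.length ≤ k := by
        have := List.length_append (as := w₁) (bs := w₂)
        have h1' : 1 ≤ w₁.length := List.length_pos_iff.2 h1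
        have h2' : 1 ≤ w₂.length := List.length_pos_iff.2 h2
        constructor <;> omega
      have ih1 := ih w₁ hlen'.1 h1 β hβ hb1
      have ih2 := ih w₂ hlen'.2 h2 γ hγ hb2
      have d1 : (cnf g).Derives
          ([Symbol.nonterminal β] ++ [Symbol.nonterminal γ])
          (w₁.map Symbol.terminal ++ [Symbol.nonterminal γ]) :=
        ih1.append_right [Symbol.nonterminal γ]
      have d2 : (cnf g).Derives
          (w₁.map Symbol.terminal ++ [Symbol.nonterminal γ])
          (w₁.map Symbol.terminal ++ w₂.map Symbol.terminal) :=
        ih2.append_left (w₁.map Symbol.terminal)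
      have d1' : (cnf g).Derives
          [Symbol.nonterminal β, Symbol.nonterminal γ]
          (w₁.map Symbol.terminal ++ [Symbol.nonterminal γ]) := by simpa using d1
      have := hp.trans_derives (d1'.trans d2)
      simpa using this
    · have hw1 : w.length = 1 := by
        have : w.length ≠ 0 := by simpa [List.length_eq_zero_iff] using hne
        omega
      obtain ⟨a, rfl⟩ : ∃ a, w = [a] := by
        cases w with
        | nil => simp at hw1
        | cons a l => exact ⟨a, by simp_all⟩
      have hrule : (⟨α, [Symbol.terminal a]⟩ : ContextFreeRule T (cnf g).NT) ∈
          (cnf g).rules := by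
        rw [mem_cnf_rules]
        exact Or.inr ⟨α, a, hα, by simpa using hd, rfl⟩
      have : (cnf g).Produces [Symbol.nonterminal α] [Symbol.terminal a] :=
        ⟨_, hrule, ContextFreeRule.Rewrites.input_output⟩
      simpa using this.single

end CNFAux


namespace CNFAux

open ContextFreeGrammar

universe u
variable {T : Type}

def liftSym {N : Type} : Symbol T N → Symbol T (ULift.{u} N)
  | .terminal a => .terminal a
  | .nonterminal n => .nonterminal ⟨n⟩

def downSym {N : Type} : Symbol T (ULift.{u} N) → Symbol T N
  | .terminal a => .terminal a
  | .nonterminal n => .nonterminal n.down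

@[simp] lemma downSym_liftSym {N : Type} (x : Symbol T N) :
    downSym (liftSym.{u} x) = x := by cases x <;> rfl

@[simp] lemma liftSym_downSym {N : Type} (x : Symbol T (ULift.{u} N)) :
    liftSym (downSym x) = x := by cases x <;> rfl

lemma liftSym_injective {N : Type} :
    Function.Injective (liftSym.{u} : Symbol T N → _) :=
  fun x y h => by rw [← downSym_liftSym x, h, downSym_liftSym]

def liftRule {N : Type} (r : ContextFreeRule T N) : ContextFreeRule T (ULift.{u} N) :=
  ⟨⟨r.input⟩, r.output.map liftSym⟩

lemma liftRule_injective {N : Type} :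
    Function.Injective (liftRule.{u} : ContextFreeRule T N → _) := by
  intro r s h
  injection h with h1 h2
  ext : 1
  · exact congrArg ULift.down h1
  · exact List.map_injective_iff.2 liftSym_injective h2

/-- Lift a grammar to a higher nonterminal universe. -/
def liftG (g : ContextFreeGrammar.{0} T) : ContextFreeGrammar.{0} T :=
  ⟨ULift g.NT, ⟨g.initial⟩, g.rules.map ⟨liftRule, liftRule_injective⟩⟩

lemma liftG_shape {g : ContextFreeGrammar.{0} T}
    (hshape : ∀ r ∈ g.rules,
      (∃ n₁ n₂ : g.NT, r.output = [Symbol.nonterminal n₁, Symbol.nonterminal n₂]) ∨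
      (∃ a : T, r.output = [Symbol.terminal a])) :
    ∀ r ∈ (liftG g).rules,
      (∃ n₁ n₂ : (liftG g).NT,
        r.output = [Symbol.nonterminal n₁, Symbol.nonterminal n₂]) ∨
      (∃ a : T, r.output = [Symbol.terminal a]) := by
  intro r hr
  replace hr := Finset.mem_map.1 hr
  obtain ⟨r₀, hr₀, rfl⟩ := hr
  rcases hshape r₀ hr₀ with ⟨n₁, n₂, ho⟩ | ⟨a, ho⟩
  · exact Or.inl ⟨⟨n₁⟩, ⟨n₂⟩, by show (r₀.output.map liftSym) = _; rw [ho]; rfl⟩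
  · exact Or.inr ⟨a, by show (r₀.output.map liftSym) = _; rw [ho]; rfl⟩

lemma liftRule_rewrites {N : Type} {r : ContextFreeRule T N} {u v : List (Symbol T N)}
    (h : r.Rewrites u v) :
    (liftRule.{u} r).Rewrites (u.map liftSym) (v.map liftSym) := by
  rcases h.exists_parts with ⟨p, q, rfl, rfl⟩
  have := (liftRule.{u} r).rewrites_of_exists_parts (p.map liftSym) (q.map liftSym)
  simpa [liftRule, liftSym] using this

lemma liftRule_rewrites_down {N : Type} {r : ContextFreeRule T N}
    {u v : List (Symbol T (ULift.{u} N))} (h : (liftRule.{u} r).Rewrites u v) :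
    r.Rewrites (u.map downSym) (v.map downSym) := by
  rcases h.exists_parts with ⟨p, q, rfl, rfl⟩
  have := r.rewrites_of_exists_parts (p.map downSym) (q.map downSym)
  have hmap : (r.output.map liftSym.{u}).map downSym = r.output := by
    rw [List.map_map]
    simp [Function.comp_def]
  simpa [liftRule, downSym, hmap] using this

lemma liftG_derives {g : ContextFreeGrammar.{0} T} {u v : List (Symbol T g.NT)}
    (h : g.Derives u v) :
    (liftG g).Derives (u.map liftSym) (v.map liftSym) := by
  induction h with
  | refl => rfl
  | tail _ hp ih =>
    rcases hp with ⟨r, hr, hrw⟩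
    refine ih.trans_produces ⟨liftRule r, ?_, liftRule_rewrites hrw⟩
    exact Finset.mem_map.2 ⟨r, hr, rfl⟩

lemma liftG_derives_down {g : ContextFreeGrammar.{0} T}
    {u v : List (Symbol T (liftG g).NT)}
    (h : (liftG g).Derives u v) :
    g.Derives (u.map downSym) (v.map downSym) := by
  induction h with
  | refl => rfl
  | tail _ hp ih =>
    rcases hp with ⟨r, hr, hrw⟩
    replace hr := Finset.mem_map.1 hr
    obtain ⟨r₀, hr₀, rfl⟩ := hr
    exact ih.trans_produces ⟨r₀, hr₀, liftRule_rewrites_down hrw⟩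

lemma liftG_language (g : ContextFreeGrammar.{0} T) :
    (liftG g).language = g.language := by
  ext w
  rw [mem_language_iff, mem_language_iff]
  constructor
  · intro h
    have := liftG_derives_down h
    simpa [downSym, List.map_map, Function.comp_def, liftG] using this
  · intro h
    have := liftG_derives h
    simpa [liftSym, List.map_map, Function.comp_def, liftG] using this

end CNFAux

/-- Completeness of Chomsky normal form: every context-free language `L` is
generated, up to removal of the empty string, by a grammar all of whose rules
have the form `N → N₁N₂` or `N → a`. -/
theorem stmt_9 {σ : Type} (L : Language σ) (hL : L.IsContextFree) :
    ∃ g : ContextFreeGrammar σ,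
      (∀ r ∈ g.rules,
        (∃ n₁ n₂ : g.NT, r.output = [Symbol.nonterminal n₁, Symbol.nonterminal n₂]) ∨
        (∃ a : σ, r.output = [Symbol.terminal a])) ∧
      ∀ w : List σ, w ∈ g.language ↔ w ∈ L ∧ w ≠ [] := by
  classical
  obtain ⟨g₀, hg₀⟩ := hL
  refine ⟨CNFAux.liftG (CNFAux.cnf g₀),
    CNFAux.liftG_shape (fun r hr => CNFAux.cnf_shape hr), fun w => ?_⟩
  rw [CNFAux.liftG_language]
  constructor
  · intro hw
    rw [ContextFreeGrammar.mem_language_iff] at hw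
    constructor
    · have h1 := CNFAux.cnf_sound hw
      rw [CNFAux.embed_nt, CNFAux.embed_terminals] at h1
      rw [← hg₀]
      exact h1
    · intro hwe
      subst hwe
      exact CNFAux.cnf_nonempty hw (by simp) (by simp)
  · rintro ⟨hwL, hwne⟩
    rw [← hg₀, ContextFreeGrammar.mem_language_iff] at hwL
    exact CNFAux.cnf_complete w.length w le_rfl hwne _ (CNFAux.initial_mem_F g₀) hwL
end
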